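/- Let Ω ⊆ ℝ² be a bounded set. There exists a constant C > 0 depending only on Ω such that for every n ≥ 1 and every family of points x_1, …, x_n ∈ Ω, one has min_{τ ∈ S_n} Σ_{i=1}^n |x_{τ(i)} − x_{τ(i+1)}|² ≤ C, where S_n is the symmetric group on {1,…,n} and one uses the convention τ(n+1) = τ(1). -/

import Mathlib

open scoped RealInnerProductSpace

section lists
variable {E : Type*} [NormedAddCommGroup E] [InnerProductSpace ℝ E]

/-- Path cost from previous point `p` through list `l` to final anchor `b`;
middle edges weight 1, final edge weight 2. -/
noncomputable def Bq (p : E) : List E → E → ℝ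
  | [], b => 2 * dist p b ^ 2
  | q :: t, b => dist p q ^ 2 + Bq q t b

/-- Anchored path cost from `a` through `l` to `b`, with end edges weighted 2. -/
noncomputable def Aq (a : E) : List E → E → ℝ
  | [], _ => 0
  | h :: t, b => 2 * dist a h ^ 2 + Bq h t b

@[simp] lemma Aq_nil (a b : E) : Aq a [] b = 0 := rfl

lemma Bq_nonneg (p : E) (l : List E) (b : E) : 0 ≤ Bq p l b := by
  induction l generalizing p with
  | nil => simp [Bq]
  | cons q t ih => simp only [Bq]; have := ih q; positivity

lemma Aq_nonneg (a : E) (l : List E) (b : E) : 0 ≤ Aq a l b := by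
  cases l with
  | nil => simp [Aq]
  | cons h t => simp only [Aq]; have := Bq_nonneg h t b; positivity

lemma Bq_const (c : E) (l : List E) (b : E) (h : ∀ p ∈ l, p = c) :
    Bq c l b ≤ 2 * dist c b ^ 2 := by
  induction l with
  | nil => simp [Bq]
  | cons q t ih =>
    have hq : q = c := h q (by simp)
    subst hq
    have : Bq q t b ≤ 2 * dist q b ^ 2 := ih (fun p hp => h p (by simp [hp]))
    simpa [Bq] using this

lemma Aq_const (a : E) (c : E) (t : List E) (b : E) (h : ∀ p ∈ t, p = c) :
    Aq a (c :: t) b ≤ 2 * dist a c ^ 2 + 2 * dist c b ^ 2 := by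
  simp only [Aq]
  have := Bq_const c t b h
  linarith

lemma dist_sq_glue (p m q : E) : dist p q ^ 2 ≤ 2 * dist p m ^ 2 + 2 * dist m q ^ 2 := by
  have h := dist_triangle p m q
  have h2 : dist p q ^ 2 ≤ (dist p m + dist m q) ^ 2 :=
    pow_le_pow_left₀ dist_nonneg h 2
  nlinarith [sq_nonneg (dist p m - dist m q)]

/-- gluing when the second part is nonempty -/
lemma Bq_glue (b m : E) (ys : List E) (hys : ys ≠ []) :
    ∀ (xs : List E) (p : E), Bq p (xs ++ ys) b ≤ Bq p xs m + Aq m ys b := by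
  intro xs
  induction xs with
  | nil =>
    intro p
    cases ys with
    | nil => exact absurd rfl hys
    | cons h t =>
      simp only [List.nil_append, Bq, Aq]
      have := dist_sq_glue p m h
      linarith
  | cons x xs ih =>
    intro p
    simp only [List.cons_append, Bq, List.append_eq]
    have := ih x
    linarith

lemma Aq_glue_ne (a b m : E) (xs ys : List E) (hxs : xs ≠ []) (hys : ys ≠ []) :
    Aq a (xs ++ ys) b ≤ Aq a xs m + Aq m ys b := by
  cases xs with
  | nil => exact absurd rfl hxs
  | cons h t =>
    cases ys with
    | nil => exact absurd rfl hys
    | cons h' t' =>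
      simp only [List.cons_append, Aq]
      have := Bq_glue b m (h' :: t') (by simp) t h
      simp only [Aq] at this
      linarith

lemma Bq_endswap (b m : E) (R2 : ℝ) :
    ∀ (xs : List E) (p : E), dist p b ^ 2 ≤ R2 → (∀ q ∈ xs, dist q b ^ 2 ≤ R2) →
      Bq p xs b ≤ Bq p xs m + 2 * R2 := by
  intro xs
  induction xs with
  | nil =>
    intro p hp _
    simp only [Bq]
    have := sq_nonneg (dist p m)
    nlinarith [dist_nonneg (x := p) (y := m)]
  | cons q t ih =>
    intro p hp hq
    simp only [Bq]
    have := ih q (hq q (by simp)) (fun r hr => hq r (by simp [hr]))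
    linarith

/-- universal gluing with loss `2 * R2` -/
lemma Aq_glue (a b m : E) (R2 : ℝ) (hR2 : 0 ≤ R2) (xs ys : List E)
    (Ha : ∀ p ∈ ys, dist a p ^ 2 ≤ R2) (Hb : ∀ p ∈ xs, dist p b ^ 2 ≤ R2) :
    Aq a (xs ++ ys) b ≤ Aq a xs m + Aq m ys b + 2 * R2 := by
  cases hxs : xs with
  | nil =>
    cases hys : ys with
    | nil =>
      simp [Aq]; positivity
    | cons h t =>
      simp only [List.nil_append, Aq]
      have h1 : dist a h ^ 2 ≤ R2 := Ha h (by simp [hys])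
      have h2 : (0:ℝ) ≤ dist m h ^ 2 := sq_nonneg _
      linarith
  | cons x xs' =>
    cases hys : ys with
    | nil =>
      subst hxs
      simp only [List.append_nil, Aq]
      have := Bq_endswap b m R2 xs' x (Hb x (by simp)) (fun q hq => Hb q (by simp [hq]))
      linarith
    | cons h t =>
      subst hxs; subst hys
      have := Aq_glue_ne a b m (x :: xs') (h :: t) (by simp) (by simp)
      have h3 : (0:ℝ) ≤ 2 * R2 := by positivity
      linarith

end lists

section geom
variable {E : Type*} [NormedAddCommGroup E] [InnerProductSpace ℝ E]

/-- The (filled) square with corner `a` spanned by `u` and `v`. -/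
def sqr (a u v : E) : Set E :=
  {p | ∃ t r : ℝ, 0 ≤ t ∧ t ≤ 1 ∧ 0 ≤ r ∧ r ≤ 1 ∧ p = a + t • u + r • v}

variable {a u v : E} {s : ℝ}

lemma norm_comb (huv : ⟪u, v⟫ = 0) (hu : ‖u‖ = s) (hv : ‖v‖ = s) (x y : ℝ) :
    ‖x • u + y • v‖ ^ 2 = (x ^ 2 + y ^ 2) * s ^ 2 := by
  rw [norm_add_sq_real]
  rw [norm_smul, norm_smul, inner_smul_left, inner_smul_right, huv]
  simp [hu, hv, mul_pow]
  ring

lemma sqr_dist_sq (huv : ⟪u, v⟫ = 0) (hu : ‖u‖ = s) (hv : ‖v‖ = s)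
    {p q : E} (hp : p ∈ sqr a u v) (hq : q ∈ sqr a u v) :
    dist p q ^ 2 ≤ 2 * s ^ 2 := by
  obtain ⟨t1, r1, ht10, ht11, hr10, hr11, rfl⟩ := hp
  obtain ⟨t2, r2, ht20, ht21, hr20, hr21, rfl⟩ := hq
  rw [dist_eq_norm]
  have he : a + t1 • u + r1 • v - (a + t2 • u + r2 • v) = (t1 - t2) • u + (r1 - r2) • v := by
    module
  rw [he, norm_comb huv hu hv]
  have hb : (t1 - t2) ^ 2 + (r1 - r2) ^ 2 ≤ 2 := by nlinarith
  have := mul_le_mul_of_nonneg_right hb (sq_nonneg s)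
  linarith

lemma sqr_corner_bound (huv : ⟪u, v⟫ = 0) (hu : ‖u‖ = s) (hv : ‖v‖ = s)
    {p : E} (hp : p ∈ sqr a u v) :
    dist a p ^ 2 + dist p (a + u) ^ 2 ≤ 3 * s ^ 2 := by
  obtain ⟨t, r, ht0, ht1, hr0, hr1, rfl⟩ := hp
  have h1 : dist a (a + t • u + r • v) ^ 2 = (t ^ 2 + r ^ 2) * s ^ 2 := by
    rw [dist_eq_norm]
    have : a - (a + t • u + r • v) = (-t) • u + (-r) • v := by module
    rw [this, norm_comb huv hu hv]; ring
  have h2 : dist (a + t • u + r • v) (a + u) ^ 2 = ((1 - t) ^ 2 + r ^ 2) * s ^ 2 := by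
    rw [dist_eq_norm]
    have : a + t • u + r • v - (a + u) = (t - 1) • u + r • v := by module
    rw [this, norm_comb huv hu hv]; ring
  rw [h1, h2]
  have hb : t ^ 2 + r ^ 2 + ((1 - t) ^ 2 + r ^ 2) ≤ 3 := by nlinarith
  have := mul_le_mul_of_nonneg_right hb (sq_nonneg s)
  linarith

lemma mem_sqr_coord (hs : 0 < s) (huv : ⟪u, v⟫ = 0) (hu : ‖u‖ = s) (hv : ‖v‖ = s)
    {p : E} {t r : ℝ} (hp : p = a + t • u + r • v) :
    ⟪u, p - a⟫ = t * s ^ 2 ∧ ⟪v, p - a⟫ = r * s ^ 2 := by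
  have hd : p - a = t • u + r • v := by rw [hp]; module
  constructor
  · rw [hd, inner_add_right, inner_smul_right, inner_smul_right,
      real_inner_self_eq_norm_sq, huv, hu]
    ring
  · have huv' : ⟪v, u⟫ = (0:ℝ) := by
      rw [real_inner_comm]; exact huv
    rw [hd, inner_add_right, inner_smul_right, inner_smul_right,
      real_inner_self_eq_norm_sq, huv', hv]
    ring

end geom

section key
variable {E : Type*} [NormedAddCommGroup E] [InnerProductSpace ℝ E]

lemma key_lemma (k : ℕ) : ∀ (a u v : E) (s : ℝ), 0 < s → ⟪u, v⟫ = 0 → ‖u‖ = s → ‖v‖ = s →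
    ∀ l : List E, (∀ p ∈ l, p ∈ sqr a u v) →
    (∀ p ∈ l, ∀ q ∈ l, p ≠ q → 2 * s / 2 ^ k ≤ dist p q) →
    ∃ l' : List E, l'.Perm l ∧ Aq a l' (a + u) ≤ 48 * s ^ 2 := by
  induction k with
  | zero =>
    intro a u v s hs huv hu hv l hmem hsep
    have hall : ∀ p ∈ l, ∀ q ∈ l, p = q := by
      intro p hp q hq
      by_contra hne
      have h1 : 2 * s ≤ dist p q := by simpa using hsep p hp q hq hne
      have h2 : dist p q ^ 2 ≤ 2 * s ^ 2 := sqr_dist_sq huv hu hv (hmem p hp) (hmem q hq)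
      have h3 : (2 * s) ^ 2 ≤ dist p q ^ 2 := pow_le_pow_left₀ (by positivity) h1 2
      nlinarith
    refine ⟨l, List.Perm.refl l, ?_⟩
    cases l with
    | nil => simp [Aq]; positivity
    | cons c t =>
      have hc : c ∈ c :: t := by simp
      have h1 := Aq_const a c t (a + u) (fun p hp => hall p (by simp [hp]) c hc)
      have hmema : a ∈ sqr a u v := ⟨0, 0, le_refl _, zero_le_one, le_refl _, zero_le_one, by module⟩
      have hmemb : a + u ∈ sqr a u v := ⟨1, 0, zero_le_one, le_refl _, le_refl _, zero_le_one, by module⟩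
      have d1 : dist a c ^ 2 ≤ 2 * s ^ 2 := sqr_dist_sq huv hu hv hmema (hmem c hc)
      have d2 : dist c (a + u) ^ 2 ≤ 2 * s ^ 2 := sqr_dist_sq huv hu hv (hmem c hc) hmemb
      have hss : 0 ≤ s ^ 2 := sq_nonneg s
      linarith
  | succ k ih =>
    intro a u v s hs huv hu hv l hmem hsep
    classical
    -- the four quadrant predicates
    set T : E → Prop := fun p => ⟪u, p - a⟫ ≤ s ^ 2 / 2 with hT
    set R : E → Prop := fun p => ⟪v, p - a⟫ ≤ s ^ 2 / 2 with hR
    set la := l.filter (fun p => decide (T p)) with hla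
    set lb := l.filter (fun p => ! decide (T p)) with hlb
    set l1 := la.filter (fun p => decide (R p)) with hl1
    set l2 := la.filter (fun p => ! decide (R p)) with hl2
    set l4 := lb.filter (fun p => decide (R p)) with hl4
    set l3 := lb.filter (fun p => ! decide (R p)) with hl3
    have hpermab : (la ++ lb).Perm l := List.filter_append_perm _ l
    have hperm12 : (l1 ++ l2).Perm la := List.filter_append_perm _ la
    have hperm43 : (l4 ++ l3).Perm lb := List.filter_append_perm _ lb
    have hperm : ((l1 ++ l2) ++ (l3 ++ l4)).Perm l :=
      ((hperm12.append ((List.perm_append_comm).trans hperm43))).trans hpermab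
    -- membership and coordinate facts
    have hmemla : ∀ p ∈ la, p ∈ l ∧ T p := by
      intro p hp
      rw [hla, List.mem_filter] at hp
      exact ⟨hp.1, by simpa using hp.2⟩
    have hmemlb : ∀ p ∈ lb, p ∈ l ∧ ¬ T p := by
      intro p hp
      rw [hlb, List.mem_filter] at hp
      exact ⟨hp.1, by simpa using hp.2⟩
    have hmeml1 : ∀ p ∈ l1, p ∈ l ∧ T p ∧ R p := by
      intro p hp
      rw [hl1, List.mem_filter] at hp
      exact ⟨(hmemla p hp.1).1, (hmemla p hp.1).2, by simpa using hp.2⟩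
    have hmeml2 : ∀ p ∈ l2, p ∈ l ∧ T p ∧ ¬ R p := by
      intro p hp
      rw [hl2, List.mem_filter] at hp
      exact ⟨(hmemla p hp.1).1, (hmemla p hp.1).2, by simpa using hp.2⟩
    have hmeml3 : ∀ p ∈ l3, p ∈ l ∧ ¬ T p ∧ ¬ R p := by
      intro p hp
      rw [hl3, List.mem_filter] at hp
      exact ⟨(hmemlb p hp.1).1, (hmemlb p hp.1).2, by simpa using hp.2⟩
    have hmeml4 : ∀ p ∈ l4, p ∈ l ∧ ¬ T p ∧ R p := by
      intro p hp
      rw [hl4, List.mem_filter] at hp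
      exact ⟨(hmemlb p hp.1).1, (hmemlb p hp.1).2, by simpa using hp.2⟩
    -- coordinates
    have hcoord : ∀ p ∈ l, ∃ t r : ℝ, 0 ≤ t ∧ t ≤ 1 ∧ 0 ≤ r ∧ r ≤ 1 ∧
        p = a + t • u + r • v ∧ (T p ↔ t ≤ 1/2) ∧ (R p ↔ r ≤ 1/2) := by
      intro p hp
      obtain ⟨t, r, ht0, ht1, hr0, hr1, hpe⟩ := hmem p hp
      obtain ⟨hiu, hiv⟩ := mem_sqr_coord hs huv hu hv hpe
      refine ⟨t, r, ht0, ht1, hr0, hr1, hpe, ?_, ?_⟩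
      · rw [hT]; simp only [hiu]
        constructor
        · intro h; nlinarith [pow_pos hs 2]
        · intro h; nlinarith [pow_pos hs 2]
      · rw [hR]; simp only [hiv]
        constructor
        · intro h; nlinarith [pow_pos hs 2]
        · intro h; nlinarith [pow_pos hs 2]
    -- subsquare data
    have hs2 : 0 < s / 2 := by positivity
    have hu2 : ‖(2⁻¹:ℝ) • u‖ = s / 2 := by
      rw [norm_smul, hu]; simp; ring
    have hv2 : ‖(2⁻¹:ℝ) • v‖ = s / 2 := by
      rw [norm_smul, hv]; simp; ring
    have hnu2 : ‖-((2⁻¹:ℝ) • u)‖ = s / 2 := by rw [norm_neg]; exact hu2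
    have hnv2 : ‖-((2⁻¹:ℝ) • v)‖ = s / 2 := by rw [norm_neg]; exact hv2
    have huv' : ⟪v, u⟫ = (0:ℝ) := by rw [real_inner_comm]; exact huv
    have hinn1 : ⟪(2⁻¹:ℝ) • v, (2⁻¹:ℝ) • u⟫ = (0:ℝ) := by
      rw [inner_smul_left, inner_smul_right, huv']; simp
    have hinn2 : ⟪(2⁻¹:ℝ) • u, (2⁻¹:ℝ) • v⟫ = (0:ℝ) := by
      rw [inner_smul_left, inner_smul_right, huv]; simp
    have hinn4 : ⟪-((2⁻¹:ℝ) • v), -((2⁻¹:ℝ) • u)⟫ = (0:ℝ) := by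
      rw [inner_neg_neg]; exact hinn1
    set m1 := a + (2⁻¹:ℝ) • v with hm1
    set m2 := a + (2⁻¹:ℝ) • v + (2⁻¹:ℝ) • u with hm2
    set m3 := a + u + (2⁻¹:ℝ) • v with hm3
    set b := a + u with hb
    -- memberships in subsquares
    have hsub1 : ∀ p ∈ l1, p ∈ sqr a ((2⁻¹:ℝ) • v) ((2⁻¹:ℝ) • u) := by
      intro p hp
      obtain ⟨hpl, hTp, hRp⟩ := hmeml1 p hp
      obtain ⟨t, r, ht0, ht1, hr0, hr1, hpe, hTe, hRe⟩ := hcoord p hpl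
      have ht : t ≤ 1/2 := hTe.mp hTp
      have hr : r ≤ 1/2 := hRe.mp hRp
      exact ⟨2*r, 2*t, by linarith, by linarith, by linarith, by linarith, by rw [hpe]; module⟩
    have hsub2 : ∀ p ∈ l2, p ∈ sqr m1 ((2⁻¹:ℝ) • u) ((2⁻¹:ℝ) • v) := by
      intro p hp
      obtain ⟨hpl, hTp, hRp⟩ := hmeml2 p hp
      obtain ⟨t, r, ht0, ht1, hr0, hr1, hpe, hTe, hRe⟩ := hcoord p hpl
      have ht : t ≤ 1/2 := hTe.mp hTp
      have hr : 1/2 < r := by by_contra hc; exact hRp (hRe.mpr (by linarith))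
      exact ⟨2*t, 2*r - 1, by linarith, by linarith, by linarith, by linarith,
        by rw [hm1, hpe]; module⟩
    have hsub3 : ∀ p ∈ l3, p ∈ sqr m2 ((2⁻¹:ℝ) • u) ((2⁻¹:ℝ) • v) := by
      intro p hp
      obtain ⟨hpl, hTp, hRp⟩ := hmeml3 p hp
      obtain ⟨t, r, ht0, ht1, hr0, hr1, hpe, hTe, hRe⟩ := hcoord p hpl
      have ht : 1/2 < t := by by_contra hc; exact hTp (hTe.mpr (by linarith))
      have hr : 1/2 < r := by by_contra hc; exact hRp (hRe.mpr (by linarith))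
      exact ⟨2*t - 1, 2*r - 1, by linarith, by linarith, by linarith, by linarith,
        by rw [hm2, hpe]; module⟩
    have hsub4 : ∀ p ∈ l4, p ∈ sqr m3 (-((2⁻¹:ℝ) • v)) (-((2⁻¹:ℝ) • u)) := by
      intro p hp
      obtain ⟨hpl, hTp, hRp⟩ := hmeml4 p hp
      obtain ⟨t, r, ht0, ht1, hr0, hr1, hpe, hTe, hRe⟩ := hcoord p hpl
      have ht : 1/2 < t := by by_contra hc; exact hTp (hTe.mpr (by linarith))
      have hr : r ≤ 1/2 := hRe.mp hRp
      exact ⟨1 - 2*r, 2 - 2*t, by linarith, by linarith, by linarith, by linarith,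
        by rw [hm3, hpe]; module⟩
    -- separation for sublists
    have hsepk : ∀ li : List E, (∀ p ∈ li, p ∈ l) →
        ∀ p ∈ li, ∀ q ∈ li, p ≠ q → 2 * (s/2) / 2 ^ k ≤ dist p q := by
      intro li hsubl p hp q hq hne
      have h := hsep p (hsubl p hp) q (hsubl q hq) hne
      have he : 2 * s / 2 ^ (k+1) = 2 * (s/2) / 2 ^ k := by
        rw [pow_succ]; ring
      rw [he] at h; exact h
    -- apply induction hypothesis to the four subsquares
    obtain ⟨l1', hp1, hA1⟩ := ih a ((2⁻¹:ℝ) • v) ((2⁻¹:ℝ) • u) (s/2) hs2 hinn1 hv2 hu2 l1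
      hsub1 (hsepk l1 (fun p hp => (hmeml1 p hp).1))
    obtain ⟨l2', hp2, hA2⟩ := ih m1 ((2⁻¹:ℝ) • u) ((2⁻¹:ℝ) • v) (s/2) hs2 hinn2 hu2 hv2 l2
      hsub2 (hsepk l2 (fun p hp => (hmeml2 p hp).1))
    obtain ⟨l3', hp3, hA3⟩ := ih m2 ((2⁻¹:ℝ) • u) ((2⁻¹:ℝ) • v) (s/2) hs2 hinn2 hu2 hv2 l3
      hsub3 (hsepk l3 (fun p hp => (hmeml3 p hp).1))
    obtain ⟨l4', hp4, hA4⟩ := ih m3 (-((2⁻¹:ℝ) • v)) (-((2⁻¹:ℝ) • u)) (s/2) hs2 hinn4 hnv2 hnu2 l4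
      hsub4 (hsepk l4 (fun p hp => (hmeml4 p hp).1))
    -- normalize the endpoints of the four bounds
    have e1 : a + (2⁻¹:ℝ) • v = m1 := rfl
    have e2 : m1 + (2⁻¹:ℝ) • u = m2 := by rw [hm1, hm2]
    have e3 : m2 + (2⁻¹:ℝ) • u = m3 := by rw [hm2, hm3]; module
    have e4 : m3 + -((2⁻¹:ℝ) • v) = b := by rw [hm3, hb]; module
    rw [e1] at hA1
    rw [e2] at hA2
    rw [e3] at hA3
    rw [e4] at hA4
    have h48 : 48 * (s/2) ^ 2 = 12 * s ^ 2 := by ring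
    rw [h48] at hA1 hA2 hA3 hA4
    -- the combined list
    refine ⟨l1' ++ (l2' ++ (l3' ++ l4')), ?_, ?_⟩
    · have : (l1' ++ (l2' ++ (l3' ++ l4'))).Perm (l1 ++ (l2 ++ (l3 ++ l4))) :=
        hp1.append (hp2.append (hp3.append hp4))
      refine this.trans ?_
      have : l1 ++ (l2 ++ (l3 ++ l4)) = (l1 ++ l2) ++ (l3 ++ l4) := by
        rw [List.append_assoc]
      rw [this]; exact hperm
    -- membership of everything in the big square
    have hmem1' : ∀ p ∈ l1', p ∈ sqr a u v := fun p hp => hmem p (hmeml1 p (hp1.mem_iff.mp hp)).1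
    have hmem2' : ∀ p ∈ l2', p ∈ sqr a u v := fun p hp => hmem p (hmeml2 p (hp2.mem_iff.mp hp)).1
    have hmem3' : ∀ p ∈ l3', p ∈ sqr a u v := fun p hp => hmem p (hmeml3 p (hp3.mem_iff.mp hp)).1
    have hmem4' : ∀ p ∈ l4', p ∈ sqr a u v := fun p hp => hmem p (hmeml4 p (hp4.mem_iff.mp hp)).1
    have hmema : a ∈ sqr a u v := ⟨0, 0, le_refl _, zero_le_one, le_refl _, zero_le_one, by module⟩
    have hmemb : b ∈ sqr a u v := ⟨1, 0, zero_le_one, le_refl _, le_refl _, zero_le_one, by rw [hb]; module⟩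
    have hmemm1 : m1 ∈ sqr a u v := ⟨0, 2⁻¹, le_refl _, zero_le_one, by norm_num, by norm_num, by rw [hm1]; module⟩
    have hmemm2 : m2 ∈ sqr a u v := ⟨2⁻¹, 2⁻¹, by norm_num, by norm_num, by norm_num, by norm_num, by rw [hm2]; module⟩
    have hmemm3 : m3 ∈ sqr a u v := ⟨1, 2⁻¹, by norm_num, by norm_num, by norm_num, by norm_num, by rw [hm3]; module⟩
    have hd2 : ∀ p ∈ sqr a u v, ∀ q ∈ sqr a u v, dist p q ^ 2 ≤ 2 * s ^ 2 :=
      fun p hp q hq => sqr_dist_sq huv hu hv hp hq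
    have hss : (0:ℝ) ≤ 2 * s ^ 2 := by positivity
    -- glue
    by_cases hemp : l1' = [] ∨ l2' = [] ∨ l3' = [] ∨ l4' = []
    · -- some subsquare is empty: use lossy gluing, but one of the costs vanishes
      have g1 : Aq a (l1' ++ (l2' ++ (l3' ++ l4'))) b ≤
          Aq a l1' m1 + Aq m1 (l2' ++ (l3' ++ l4')) b + 2 * (2 * s ^ 2) := by
        refine Aq_glue a b m1 (2 * s ^ 2) hss _ _ ?_ ?_
        · intro p hp
          rcases List.mem_append.mp hp with h | h
          · exact hd2 a hmema p (hmem2' p h)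
          · rcases List.mem_append.mp h with h' | h'
            · exact hd2 a hmema p (hmem3' p h')
            · exact hd2 a hmema p (hmem4' p h')
        · intro p hp; exact hd2 p (hmem1' p hp) b hmemb
      have g2 : Aq m1 (l2' ++ (l3' ++ l4')) b ≤
          Aq m1 l2' m2 + Aq m2 (l3' ++ l4') b + 2 * (2 * s ^ 2) := by
        refine Aq_glue m1 b m2 (2 * s ^ 2) hss _ _ ?_ ?_
        · intro p hp
          rcases List.mem_append.mp hp with h | h
          · exact hd2 m1 hmemm1 p (hmem3' p h)
          · exact hd2 m1 hmemm1 p (hmem4' p h)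
        · intro p hp; exact hd2 p (hmem2' p hp) b hmemb
      have g3 : Aq m2 (l3' ++ l4') b ≤
          Aq m2 l3' m3 + Aq m3 l4' b + 2 * (2 * s ^ 2) := by
        refine Aq_glue m2 b m3 (2 * s ^ 2) hss _ _ ?_ ?_
        · intro p hp; exact hd2 m2 hmemm2 p (hmem4' p hp)
        · intro p hp; exact hd2 p (hmem3' p hp) b hmemb
      have hzero : Aq a l1' m1 + Aq m1 l2' m2 + Aq m2 l3' m3 + Aq m3 l4' b ≤ 36 * s ^ 2 := by
        have n1 := Aq_nonneg a l1' m1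
        have n2 := Aq_nonneg m1 l2' m2
        have n3 := Aq_nonneg m2 l3' m3
        have n4 := Aq_nonneg m3 l4' b
        rcases hemp with h | h | h | h
        · rw [h, Aq_nil]; linarith
        · rw [h, Aq_nil]; linarith
        · rw [h, Aq_nil]; linarith
        · rw [h, Aq_nil]; linarith
      linarith
    · push_neg at hemp
      obtain ⟨hne1, hne2, hne3, hne4⟩ := hemp
      have hne234 : l2' ++ (l3' ++ l4') ≠ [] := by
        simp [hne2]
      have hne34 : l3' ++ l4' ≠ [] := by simp [hne3]
      have g1 := Aq_glue_ne a b m1 l1' (l2' ++ (l3' ++ l4')) hne1 hne234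
      have g2 := Aq_glue_ne m1 b m2 l2' (l3' ++ l4') hne2 hne34
      have g3 := Aq_glue_ne m2 b m3 l3' l4' hne3 hne4
      linarith

end key

section wrapper
variable {E : Type*} [NormedAddCommGroup E] [InnerProductSpace ℝ E]

lemma exists_sep_pt (x : E) : ∀ t : List E, ∃ ε > (0:ℝ), ∀ q ∈ t, q ≠ x → ε ≤ dist x q := by
  intro t
  induction t with
  | nil => exact ⟨1, one_pos, by simp⟩
  | cons y t ih =>
    obtain ⟨ε, hε, hsep⟩ := ih
    by_cases hy : y = x
    · exact ⟨ε, hε, by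
        intro q hq hqx
        rcases List.mem_cons.mp hq with h | h
        · exact absurd (h.trans hy) hqx
        · exact hsep q h hqx⟩
    · refine ⟨min ε (dist x y), lt_min hε (dist_pos.mpr (fun h => hy h.symm)), ?_⟩
      intro q hq hqx
      rcases List.mem_cons.mp hq with h | h
      · subst h; exact min_le_right _ _
      · exact le_trans (min_le_left _ _) (hsep q h hqx)

lemma exists_sep : ∀ l : List E, ∃ ε > (0:ℝ), ∀ p ∈ l, ∀ q ∈ l, p ≠ q → ε ≤ dist p q := by
  intro l
  induction l with
  | nil => exact ⟨1, one_pos, by simp⟩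
  | cons x t ih =>
    obtain ⟨ε₀, hε₀, h₀⟩ := ih
    obtain ⟨ε₁, hε₁, h₁⟩ := exists_sep_pt x t
    refine ⟨min ε₀ ε₁, lt_min hε₀ hε₁, ?_⟩
    intro p hp q hq hne
    rcases List.mem_cons.mp hp with h | h <;> rcases List.mem_cons.mp hq with h' | h'
    · exact absurd (h.trans h'.symm) hne
    · subst h; exact le_trans (min_le_right _ _) (h₁ q h' (fun hc => hne hc.symm))
    · subst h'; rw [dist_comm]
      exact le_trans (min_le_right _ _) (h₁ p h hne)
    · exact le_trans (min_le_left _ _) (h₀ p h q h' hne)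

lemma key_wrapped (a u v : E) (s : ℝ) (hs : 0 < s) (huv : ⟪u, v⟫ = 0)
    (hu : ‖u‖ = s) (hv : ‖v‖ = s) (l : List E) (hmem : ∀ p ∈ l, p ∈ sqr a u v) :
    ∃ l' : List E, l'.Perm l ∧ Aq a l' (a + u) ≤ 48 * s ^ 2 := by
  obtain ⟨ε, hε, hsep⟩ := exists_sep l
  obtain ⟨k, hk⟩ := pow_unbounded_of_one_lt (R := ℝ) (2 * s / ε) one_lt_two
  refine key_lemma k a u v s hs huv hu hv l hmem ?_
  intro p hp q hq hne
  refine le_trans ?_ (hsep p hp q hq hne)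
  rw [div_le_iff₀ (by positivity)]
  have h2 : (0:ℝ) < 2 ^ k := by positivity
  rw [div_lt_iff₀ hε] at hk
  nlinarith

/-- chain cost without anchors -/
noncomputable def Cc (p : E) : List E → ℝ
  | [] => 0
  | q :: t => dist p q ^ 2 + Cc q t

lemma Cc_le_Bq (l : List E) : ∀ p b : E, Cc p l ≤ Bq p l b := by
  induction l with
  | nil => intro p b; simp only [Cc, Bq]; positivity
  | cons q t ih =>
    intro p b
    simp only [Cc, Bq]
    have := ih q b
    linarith

lemma Cc_ofFn : ∀ (m : ℕ) (y : Fin (m+1) → E),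
    (∑ i : Fin m, dist (y i.castSucc) (y i.succ) ^ 2) = Cc (y 0) (List.ofFn (y ∘ Fin.succ)) := by
  intro m
  induction m with
  | zero => intro y; simp [Cc]
  | succ m ih =>
    intro y
    have hih := ih (y ∘ Fin.succ)
    simp only [Function.comp, Fin.succ_zero_eq_one] at hih
    have h0 : List.ofFn (y ∘ Fin.succ) = y 1 :: List.ofFn ((y ∘ Fin.succ) ∘ Fin.succ) := by
      rw [List.ofFn_succ]
      congr 1
    rw [h0]
    simp only [Cc]
    rw [Fin.sum_univ_succ, Fin.castSucc_zero, Fin.succ_zero_eq_one]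
    simp only [← Fin.succ_castSucc]
    rw [hih]

lemma tour_sum_le (m : ℕ) (y : Fin (m+1) → E) (a b : E) :
    ∑ i : Fin (m+1), dist (y i) (y (finRotate (m+1) i)) ^ 2
      ≤ Aq a (List.ofFn y) b + dist (y (Fin.last m)) (y 0) ^ 2 := by
  rw [Fin.sum_univ_castSucc]
  have h1 : ∀ i : Fin m, finRotate (m+1) i.castSucc = i.succ := by
    intro i
    rw [finRotate_succ_apply, Fin.coeSucc_eq_succ]
  have h2 : (finRotate (m+1)) (Fin.last m) = 0 := finRotate_last
  have h3 : ∑ i : Fin m, dist (y i.castSucc) (y (finRotate (m+1) i.castSucc)) ^ 2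
      = Cc (y 0) (List.ofFn (y ∘ Fin.succ)) := by
    rw [← Cc_ofFn m y]
    apply Finset.sum_congr rfl
    intro i _
    rw [h1 i]
  rw [h2, h3]
  have h4 : Aq a (List.ofFn y) b
      = 2 * dist a (y 0) ^ 2 + Bq (y 0) (List.ofFn (y ∘ Fin.succ)) b := by
    rw [List.ofFn_succ]
    rfl
  rw [h4]
  have h5 := Cc_le_Bq (List.ofFn (y ∘ Fin.succ)) (y 0) b
  have h6 : (0:ℝ) ≤ 2 * dist a (y 0) ^ 2 := by positivity
  linarith

end wrapper

section bridge
variable {α : Type*}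

lemma perm_get_equiv {l₁ l₂ : List α} (h : l₁.Perm l₂) :
    ∃ e : Fin l₁.length ≃ Fin l₂.length, ∀ i, l₁.get i = l₂.get (e i) := by
  induction h with
  | nil => exact ⟨Equiv.refl _, fun i => i.elim0⟩
  | cons x h ih =>
    obtain ⟨e, he⟩ := ih
    refine ⟨(finSuccEquiv _).trans (e.optionCongr.trans (finSuccEquiv _).symm), ?_⟩
    intro i
    refine Fin.cases ?_ ?_ i
    · simp
    · intro j
      simpa using he j
  | swap x y l =>
    refine ⟨Equiv.swap ⟨0, by simp⟩ ⟨1, by simp⟩, ?_⟩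
    intro i
    rcases i with ⟨(_ | (_ | j2)), hi⟩ <;>
      simp [Equiv.swap_apply_def, Fin.ext_iff, List.get]
  | trans h1 h2 ih1 ih2 =>
    obtain ⟨e1, he1⟩ := ih1
    obtain ⟨e2, he2⟩ := ih2
    exact ⟨e1.trans e2, fun i => (he1 i).trans (he2 (e1 i))⟩

lemma perm_ofFn {n : ℕ} (x : Fin n → α) (l : List α) (h : l.Perm (List.ofFn x)) :
    ∃ σ : Equiv.Perm (Fin n), l = List.ofFn (fun i => x (σ i)) := by
  obtain ⟨e, he⟩ := perm_get_equiv h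
  have hl : l.length = n := by simpa using h.length_eq
  refine ⟨(finCongr hl.symm).trans (e.trans (finCongr (List.length_ofFn (f := x)))), ?_⟩
  refine List.ext_get ?_ ?_
  · simp [hl]
  · intro i h1 h2
    rw [he ⟨i, h1⟩, List.get_ofFn, List.get_ofFn]
    simp
    rfl

end bridge

section euclid

lemma coord_le_norm (p : EuclideanSpace ℝ (Fin 2)) (i : Fin 2) : |p i| ≤ ‖p‖ := by
  rw [EuclideanSpace.norm_eq]
  rw [show |p i| = Real.sqrt (p i ^ 2) from (Real.sqrt_sq_eq_abs _).symm]
  apply Real.sqrt_le_sqrt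
  have h := Finset.single_le_sum (f := fun j => ‖p j‖^2) (fun j _ => by positivity)
    (Finset.mem_univ i)
  simpa [Real.norm_eq_abs, sq_abs] using h

/-- Space-filling curve bound: the quadratic travelling salesperson cost of any finite
family of points in a bounded planar set is bounded by a constant depending only on the
set. -/
theorem quadratic_TSP_uniform_bound
    (Ω : Set (EuclideanSpace ℝ (Fin 2))) (hΩbdd : Bornology.IsBounded Ω) :
    ∃ C > (0:ℝ), ∀ n : ℕ, 1 ≤ n → ∀ x : Fin n → EuclideanSpace ℝ (Fin 2),
      (∀ i, x i ∈ Ω) →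
      (⨅ τ : Equiv.Perm (Fin n),
        ∑ i : Fin n, dist (x (τ i)) (x (τ (finRotate n i))) ^ 2) ≤ C := by
  obtain ⟨r0, hr0⟩ := hΩbdd.subset_closedBall 0
  set r := max r0 1 with hrdef
  have hr1 : (0:ℝ) < r := lt_of_lt_of_le one_pos (le_max_right _ _)
  have hΩ : Ω ⊆ Metric.closedBall 0 r :=
    hr0.trans (Metric.closedBall_subset_closedBall (le_max_left _ _))
  -- the big square containing the closed ball
  set e0 : EuclideanSpace ℝ (Fin 2) := EuclideanSpace.single (0 : Fin 2) (1:ℝ) with he0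
  set e1 : EuclideanSpace ℝ (Fin 2) := EuclideanSpace.single (1 : Fin 2) (1:ℝ) with he1
  set a : EuclideanSpace ℝ (Fin 2) := (-r) • e0 + (-r) • e1 with ha
  set u : EuclideanSpace ℝ (Fin 2) := (2*r) • e0 with hudef
  set v : EuclideanSpace ℝ (Fin 2) := (2*r) • e1 with hvdef
  have hu : ‖u‖ = 2*r := by
    rw [hudef, norm_smul, he0, EuclideanSpace.norm_single]
    simp only [Real.norm_eq_abs, norm_one, mul_one]
    rw [abs_of_pos (by positivity)]
  have hv : ‖v‖ = 2*r := by
    rw [hvdef, norm_smul, he1, EuclideanSpace.norm_single]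
    simp only [Real.norm_eq_abs, norm_one, mul_one]
    rw [abs_of_pos (by positivity)]
  have huv : ⟪u, v⟫ = (0:ℝ) := by
    rw [hudef, hvdef, inner_smul_left, inner_smul_right, he0, he1]
    rw [EuclideanSpace.inner_single_left]
    simp [EuclideanSpace.single_apply]
  have hsub : Metric.closedBall (0 : EuclideanSpace ℝ (Fin 2)) r ⊆ sqr a u v := by
    intro p hp
    rw [Metric.mem_closedBall, dist_eq_norm, sub_zero] at hp
    have h0 : |p 0| ≤ r := le_trans (coord_le_norm p 0) hp
    have h1 : |p 1| ≤ r := le_trans (coord_le_norm p 1) hp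
    obtain ⟨h0a, h0b⟩ := abs_le.mp h0
    obtain ⟨h1a, h1b⟩ := abs_le.mp h1
    refine ⟨(p 0 + r)/(2*r), (p 1 + r)/(2*r),
      div_nonneg (by linarith) (by linarith),
      (div_le_one (by linarith)).mpr (by linarith),
      div_nonneg (by linarith) (by linarith),
      (div_le_one (by linarith)).mpr (by linarith), ?_⟩
    ext i
    fin_cases i <;>
      simp [ha, hudef, hvdef, he0, he1, EuclideanSpace.single_apply] <;>
      field_simp <;> ring
  refine ⟨50 * (2*r)^2, by positivity, ?_⟩
  intro n hn x hx
  obtain ⟨m, rfl⟩ : ∃ m, n = m + 1 := ⟨n - 1, by omega⟩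
  have hmem : ∀ p ∈ List.ofFn x, p ∈ sqr a u v := by
    intro p hp
    obtain ⟨i, rfl⟩ := (List.mem_ofFn (f := x) (a := p)).mp hp
    exact hsub (hΩ (hx i))
  obtain ⟨l', hperm, hA⟩ := key_wrapped a u v (2*r) (by positivity) huv hu hv
    (List.ofFn x) hmem
  obtain ⟨σ, hσ⟩ := perm_ofFn x l' hperm
  rw [hσ] at hA
  have hclose : dist (x (σ (Fin.last m))) (x (σ 0)) ^ 2 ≤ 2 * (2*r)^2 :=
    sqr_dist_sq huv hu hv (hsub (hΩ (hx _))) (hsub (hΩ (hx _)))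
  have htour := tour_sum_le m (fun i => x (σ i)) a (a + u)
  have hbdd : BddBelow (Set.range fun τ : Equiv.Perm (Fin (m+1)) =>
      ∑ i : Fin (m+1), dist (x (τ i)) (x (τ (finRotate (m+1) i))) ^ 2) := by
    refine ⟨0, ?_⟩
    rintro z ⟨τ, rfl⟩
    exact Finset.sum_nonneg fun i _ => sq_nonneg _
  refine le_trans (ciInf_le hbdd σ) ?_
  calc ∑ i : Fin (m+1), dist (x (σ i)) (x (σ (finRotate (m+1) i))) ^ 2
      ≤ Aq a (List.ofFn (fun i => x (σ i))) (a + u)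
        + dist (x (σ (Fin.last m))) (x (σ 0)) ^ 2 := htour
    _ ≤ 48 * (2*r)^2 + 2 * (2*r)^2 := add_le_add hA hclose
    _ = 50 * (2*r)^2 := by ring

end euclid
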